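/- arXiv:1002.3644 — 2 statements merged into one kernel-verified Lean document; each statement's English description precedes it below -/
import Mathlib

section
/- For all indices 1 ≤ i, j, k, l ≤ r: [S_{ij} + M_{fⱼ}∘∂_{tᵢ}, S_{kl} + M_{f_l}∘∂_{t_k}] = δ_{jk} • (S_{il} + M_{f_l}∘∂_{tᵢ}) − δ_{il} • (S_{kj} + M_{fⱼ}∘∂_{t_k}) as K-linear endomorphisms of K[x₁,…,xₙ,t₁,…,t_r] (δ the Kronecker delta); this is the bracket computation establishing that the generators s_{ij} + ∂_{tᵢ}f_j of the annihilator ideal form part of a Gröbner basis in Theorem 8.3. -/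
open MvPolynomial

variable (K : Type*) [Field K] (n r : ℕ)

/-- The image of `fⱼ ∈ K[x₁,…,xₙ]` in `K[x₁,…,xₙ,t₁,…,t_r]` under the natural
inclusion. -/
noncomputable def liftX (f : MvPolynomial (Fin n) K) :
    MvPolynomial (Fin n ⊕ Fin r) K :=
  rename Sum.inl f

/-- The operator `S_{ij} = −M_{tⱼ} ∘ ∂_{tᵢ} − δ_{ij}·id` on `K[x₁,…,xₙ,t₁,…,t_r]`
(Mellin substitution `s_{ij} ↦ −tⱼ∂_{tᵢ} − δ_{ij}`). -/
noncomputable def SOp (i j : Fin r) :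
    Module.End K (MvPolynomial (Fin n ⊕ Fin r) K) :=
  -(LinearMap.mulLeft K (X (Sum.inr j)) * (pderiv (Sum.inr i)).toLinearMap) -
    (if i = j then (1 : K) else 0) • 1

/-- Abstract bracket computation in a `K`-algebra. -/
private lemma bracket_key {K R : Type*} [CommRing K] [Ring R] [Algebra K R]
    (G H Di Dk : R) (a b c d : K)
    (hGH : G * H = H * G)
    (hDD : Di * Dk = Dk * Di)
    (hDiH : Di * H = H * Di - c • 1)
    (hDkG : Dk * G = G * Dk - d • 1) :
    (G * Di - a • 1) * (H * Dk - b • 1) - (H * Dk - b • 1) * (G * Di - a • 1)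
      = d • (H * Di - c • 1) - c • (G * Dk - d • 1) := by
  have e1 : G * Di * (H * Dk) = H * G * (Dk * Di) - c • (G * Dk) := by
    calc G * Di * (H * Dk) = G * (Di * H) * Dk := by noncomm_ring
    _ = G * (H * Di - c • 1) * Dk := by rw [hDiH]
    _ = G * H * (Di * Dk) - c • (G * Dk) := by
        simp [mul_sub, sub_mul, mul_smul_comm, smul_mul_assoc, mul_assoc]
    _ = H * G * (Dk * Di) - c • (G * Dk) := by rw [hGH, hDD]
  have e2 : H * Dk * (G * Di) = H * G * (Dk * Di) - d • (H * Di) := by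
    calc H * Dk * (G * Di) = H * (Dk * G) * Di := by noncomm_ring
    _ = H * (G * Dk - d • 1) * Di := by rw [hDkG]
    _ = H * G * (Dk * Di) - d • (H * Di) := by
        simp [mul_sub, sub_mul, mul_smul_comm, smul_mul_assoc, mul_assoc]
  have expand : (G * Di - a • 1) * (H * Dk - b • 1) - (H * Dk - b • 1) * (G * Di - a • 1)
      = G * Di * (H * Dk) - H * Dk * (G * Di) := by
    simp only [sub_mul, mul_sub, smul_mul_assoc, mul_smul_comm, one_mul, mul_one,
      smul_smul, smul_sub, mul_comm a b]
    abel
  rw [expand, e1, e2]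
  simp only [smul_sub, smul_smul, mul_comm c d]
  abel

/-- Derivatives with respect to `t`-variables kill lifted polynomials. -/
private lemma pderiv_liftX (f : MvPolynomial (Fin n) K) (i : Fin r) :
    pderiv (Sum.inr i) (liftX K n r f) = 0 := by
  unfold liftX
  induction f using MvPolynomial.induction_on with
  | C a => simp
  | add p q hp hq => simp [hp, hq]
  | mul_X p s hp => simp [pderiv_mul, hp]

private lemma pderiv_mulLeft {K : Type*} [Field K] {σ : Type*}
    (g : MvPolynomial σ K) (i : σ) :
    (pderiv i).toLinearMap * LinearMap.mulLeft K g =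
      LinearMap.mulLeft K g * (pderiv i).toLinearMap +
        LinearMap.mulLeft K (pderiv i g) := by
  refine LinearMap.ext fun p => ?_
  simp only [Module.End.mul_apply, LinearMap.add_apply, Derivation.coeFn_coe,
    LinearMap.mulLeft_apply, pderiv_mul]
  ring

private lemma mulLeft_comm' {K : Type*} [Field K] {σ : Type*}
    (g h : MvPolynomial σ K) :
    LinearMap.mulLeft K g * LinearMap.mulLeft K h =
      LinearMap.mulLeft K h * LinearMap.mulLeft K g := by
  refine LinearMap.ext fun p => ?_
  simp only [Module.End.mul_apply, LinearMap.mulLeft_apply]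
  ring

private lemma pderiv_comm' {K : Type*} [Field K] {σ : Type*} (i k : σ)
    (p : MvPolynomial σ K) :
    pderiv i (pderiv k p) = pderiv k (pderiv i p) := by
  induction p using MvPolynomial.induction_on with
  | C a => simp
  | add p q hp hq => simp [hp, hq]
  | mul_X p s hp =>
    classical
    simp only [pderiv_mul, map_add, hp, pderiv_X]
    by_cases his : s = i <;> by_cases hks : s = k <;>
      simp_all [Pi.single_apply]

set_option maxHeartbeats 1000000

/-- `[S_{ij} + M_{fⱼ}∘∂_{tᵢ}, S_{kl} + M_{f_l}∘∂_{t_k}]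
= δ_{jk} • (S_{il} + M_{f_l}∘∂_{tᵢ}) − δ_{il} • (S_{kj} + M_{fⱼ}∘∂_{t_k})`. -/
theorem stmt16 (K : Type*) [Field K] [CharZero K] (n r : ℕ)
    (f : Fin r → MvPolynomial (Fin n) K) (i j k l : Fin r) :
    (SOp K n r i j + LinearMap.mulLeft K (liftX K n r (f j)) *
        (pderiv (Sum.inr i)).toLinearMap) *
      (SOp K n r k l + LinearMap.mulLeft K (liftX K n r (f l)) *
        (pderiv (Sum.inr k)).toLinearMap) -
    (SOp K n r k l + LinearMap.mulLeft K (liftX K n r (f l)) *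
        (pderiv (Sum.inr k)).toLinearMap) *
      (SOp K n r i j + LinearMap.mulLeft K (liftX K n r (f j)) *
        (pderiv (Sum.inr i)).toLinearMap) =
    (if j = k then (1 : K) else 0) •
      (SOp K n r i l + LinearMap.mulLeft K (liftX K n r (f l)) *
        (pderiv (Sum.inr i)).toLinearMap) -
    (if i = l then (1 : K) else 0) •
      (SOp K n r k j + LinearMap.mulLeft K (liftX K n r (f j)) *
        (pderiv (Sum.inr k)).toLinearMap) := by
  classical
  have hform : ∀ a b : Fin r,
      SOp K n r a b + LinearMap.mulLeft K (liftX K n r (f b)) *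
          (pderiv (Sum.inr a)).toLinearMap =
        (LinearMap.mulLeft K (liftX K n r (f b)) -
            LinearMap.mulLeft K (X (Sum.inr b))) * (pderiv (Sum.inr a)).toLinearMap -
          (if a = b then (1 : K) else 0) • 1 := by
    intro a b
    simp only [SOp, sub_mul]
    abel
  have hDF : ∀ a b : Fin r,
      ((pderiv (Sum.inr a)).toLinearMap : Module.End K (MvPolynomial (Fin n ⊕ Fin r) K)) *
          LinearMap.mulLeft K (liftX K n r (f b)) =
        LinearMap.mulLeft K (liftX K n r (f b)) * (pderiv (Sum.inr a)).toLinearMap := by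
    intro a b
    have := pderiv_mulLeft (liftX K n r (f b)) (Sum.inr a)
    rw [pderiv_liftX] at this
    simpa [LinearMap.mulLeft_zero_eq_zero] using this
  have hDT : ∀ a b : Fin r,
      ((pderiv (Sum.inr a)).toLinearMap : Module.End K (MvPolynomial (Fin n ⊕ Fin r) K)) *
          LinearMap.mulLeft K (X (Sum.inr b)) =
        LinearMap.mulLeft K (X (Sum.inr b)) * (pderiv (Sum.inr a)).toLinearMap +
          (if a = b then (1 : K) else 0) • 1 := by
    intro a b
    have h0 := pderiv_mulLeft (K := K)
      (X (Sum.inr b) : MvPolynomial (Fin n ⊕ Fin r) K) (Sum.inr a)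
    have hX : pderiv (Sum.inr a) (X (Sum.inr b) : MvPolynomial (Fin n ⊕ Fin r) K) =
        if a = b then (1 : MvPolynomial (Fin n ⊕ Fin r) K) else 0 := by
      by_cases h : a = b
      · subst h; simp [pderiv_X_self]
      · rw [pderiv_X_of_ne (by simpa using Ne.symm h)]; simp [h]
    rw [hX] at h0
    by_cases h : a = b
    · subst h
      simpa [LinearMap.mulLeft_one, Module.End.one_eq_id] using h0
    · simpa [h, LinearMap.mulLeft_zero_eq_zero] using h0
  have hDG : ∀ a b : Fin r,
      ((pderiv (Sum.inr a)).toLinearMap : Module.End K (MvPolynomial (Fin n ⊕ Fin r) K)) *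
          (LinearMap.mulLeft K (liftX K n r (f b)) - LinearMap.mulLeft K (X (Sum.inr b))) =
        (LinearMap.mulLeft K (liftX K n r (f b)) - LinearMap.mulLeft K (X (Sum.inr b))) *
            (pderiv (Sum.inr a)).toLinearMap -
          (if a = b then (1 : K) else 0) • 1 := by
    intro a b
    rw [mul_sub, sub_mul, hDF a b, hDT a b]
    abel
  have hGG :
      (LinearMap.mulLeft K (liftX K n r (f j)) - LinearMap.mulLeft K (X (Sum.inr j))) *
          (LinearMap.mulLeft K (liftX K n r (f l)) - LinearMap.mulLeft K (X (Sum.inr l))) =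
        (LinearMap.mulLeft K (liftX K n r (f l)) - LinearMap.mulLeft K (X (Sum.inr l))) *
          (LinearMap.mulLeft K (liftX K n r (f j)) - LinearMap.mulLeft K (X (Sum.inr j))) := by
    refine LinearMap.ext fun p => ?_
    simp only [Module.End.mul_apply, LinearMap.sub_apply, LinearMap.mulLeft_apply, mul_sub]
    ring
  have hDD :
      ((pderiv (Sum.inr i)).toLinearMap : Module.End K (MvPolynomial (Fin n ⊕ Fin r) K)) *
          (pderiv (Sum.inr k)).toLinearMap =
        (pderiv (Sum.inr k)).toLinearMap * (pderiv (Sum.inr i)).toLinearMap := by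
    refine LinearMap.ext fun p => ?_
    simpa using pderiv_comm' (Sum.inr i) (Sum.inr k) p
  have hjk : (if k = j then (1 : K) else 0) = (if j = k then (1 : K) else 0) := by
    by_cases h : j = k <;> simp [h, eq_comm]
  rw [hform i j, hform k l, hform i l, hform k j, ← hjk]
  exact bracket_key _ _ _ _
    (if i = j then (1 : K) else 0) (if k = l then (1 : K) else 0)
    (if i = l then (1 : K) else 0) (if k = j then (1 : K) else 0)
    hGG hDD (hDG i l) (hDG k j)
end

section
/- For all indices 1 ≤ i, j ≤ r and 1 ≤ m ≤ n: [S_{ij} + M_{fⱼ}∘∂_{tᵢ}, ∂_{x_m} + Σ_{k=1}^r M_{∂f_k/∂x_m}∘∂_{t_k}] = 0, i.e. the operator S_{ij} + M_{fⱼ}∘∂_{tᵢ} commutes with ∂_{x_m} + Σ_k M_{∂f_k/∂x_m}∘∂_{t_k} as K-linear endomorphisms of K[x₁,…,xₙ,t₁,…,t_r]. -/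
open MvPolynomial

variable (K : Type*) [Field K] (n r : ℕ)

theorem pderiv_pderiv_comm {R σ : Type*} [CommSemiring R] (a b : σ) (p : MvPolynomial σ R) :
    pderiv a (pderiv b p) = pderiv b (pderiv a p) := by
  induction p using MvPolynomial.induction_on' with
  | add p q hp hq => simp [hp, hq]
  | monomial s c =>
    classical
    simp only [pderiv_monomial]
    rcases eq_or_ne a b with rfl | h
    · rfl
    · rw [tsub_right_comm, Finsupp.tsub_apply, Finsupp.tsub_apply,
        Finsupp.single_apply, Finsupp.single_apply, if_neg h, if_neg (Ne.symm h),
        Nat.sub_zero, Nat.sub_zero, mul_right_comm]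

theorem pderiv_inr_liftX (i : Fin r) (p : MvPolynomial (Fin n) K) :
    pderiv (Sum.inr i) (liftX K n r p) = 0 := by
  apply pderiv_eq_zero_of_notMem_vars
  intro h
  obtain ⟨a, -, ha⟩ := Finset.mem_image.1 (vars_rename _ _ h)
  exact Sum.inl_ne_inr ha

theorem pderiv_inl_liftX (m : Fin n) (p : MvPolynomial (Fin n) K) :
    pderiv (Sum.inl m) (liftX K n r p) = liftX K n r (pderiv m p) :=
  pderiv_rename Sum.inl_injective m p

/-- `S_{ij} + M_{fⱼ}∘∂_{tᵢ}` commutes with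
`∂_{x_m} + Σ_k M_{∂f_k/∂x_m}∘∂_{t_k}`. -/
theorem stmt18 (K : Type*) [Field K] [CharZero K] (n r : ℕ)
    (f : Fin r → MvPolynomial (Fin n) K) (i j : Fin r) (m : Fin n) :
    (SOp K n r i j + LinearMap.mulLeft K (liftX K n r (f j)) *
        (pderiv (Sum.inr i)).toLinearMap) *
      ((pderiv (Sum.inl m)).toLinearMap +
        ∑ k, LinearMap.mulLeft K (pderiv (Sum.inl m) (liftX K n r (f k))) *
          (pderiv (Sum.inr k)).toLinearMap) =
    ((pderiv (Sum.inl m)).toLinearMap +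
        ∑ k, LinearMap.mulLeft K (pderiv (Sum.inl m) (liftX K n r (f k))) *
          (pderiv (Sum.inr k)).toLinearMap) *
      (SOp K n r i j + LinearMap.mulLeft K (liftX K n r (f j)) *
        (pderiv (Sum.inr i)).toLinearMap) := by
  classical
  apply LinearMap.ext
  intro p
  have hcomm := fun (a b : Fin n ⊕ Fin r) (q : MvPolynomial (Fin n ⊕ Fin r) K) =>
    pderiv_pderiv_comm a b q
  have hti : ∀ (k : Fin r) (g : MvPolynomial (Fin n) K),
      pderiv (Sum.inr k) (pderiv (Sum.inl m) (liftX K n r g)) = 0 := by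
    intro k g
    rw [pderiv_inl_liftX, pderiv_inr_liftX]
  simp only [SOp, Module.End.mul_apply, LinearMap.add_apply, LinearMap.sub_apply,
    LinearMap.neg_apply, LinearMap.smul_apply, Module.End.one_apply, LinearMap.sum_apply,
    LinearMap.mulLeft_apply, Derivation.coeFn_coe, map_add, map_sum, map_sub, map_neg, map_smul,
    pderiv_mul, hti, pderiv_inr_liftX, zero_mul, add_zero, zero_add, mul_zero,
    pderiv_X, Pi.single_apply]
  have key : ∀ x : Fin r, pderiv (Sum.inr x) (pderiv (Sum.inr i) p)
      = pderiv (Sum.inr i) (pderiv (Sum.inr x) p) := fun x => hcomm _ _ _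
  simp only [key, hcomm (Sum.inl m) (Sum.inr i), Sum.inr.injEq, reduceCtorEq, if_false,
    zero_mul, zero_add, mul_ite, ite_mul, mul_one, mul_zero, Finset.sum_add_distrib,
    Finset.sum_sub_distrib, smul_add, Finset.smul_sum, Finset.sum_ite_eq, Finset.mem_univ,
    if_true, neg_add_rev]
  have e1 : ∑ x : Fin r, (pderiv (Sum.inl m)) (liftX K n r (f x)) *
        (X (Sum.inr j) * (pderiv (Sum.inr i)) ((pderiv (Sum.inr x)) p))
      = ∑ x : Fin r, X (Sum.inr j) *
        ((pderiv (Sum.inl m)) (liftX K n r (f x)) * (pderiv (Sum.inr i)) ((pderiv (Sum.inr x)) p)) :=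
    Finset.sum_congr rfl fun x _ => by ring
  have e2 : ∑ x : Fin r, (pderiv (Sum.inl m)) (liftX K n r (f x)) *
        (liftX K n r (f j) * (pderiv (Sum.inr i)) ((pderiv (Sum.inr x)) p))
      = ∑ x : Fin r, liftX K n r (f j) *
        ((pderiv (Sum.inl m)) (liftX K n r (f x)) * (pderiv (Sum.inr i)) ((pderiv (Sum.inr x)) p)) :=
    Finset.sum_congr rfl fun x _ => by ring
  rw [e1, e2]
  rw [show ∑ x : Fin r, -(X (Sum.inr j) * ((pderiv (Sum.inl m)) (liftX K n r (f x)) *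
        (pderiv (Sum.inr i)) ((pderiv (Sum.inr x)) p)))
      = -∑ x : Fin r, X (Sum.inr j) * ((pderiv (Sum.inl m)) (liftX K n r (f x)) *
        (pderiv (Sum.inr i)) ((pderiv (Sum.inr x)) p)) by
    rw [← Finset.sum_neg_distrib]]
  ring
end
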